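/- For any prime p ≥ 5, the double sum ∑_{n=0}^{p-1} ∑_{m=0}^{p-1} binomial(n+m, m)^2 is congruent to 1 modulo p if p ≡ 1 (mod 3), and congruent to -1 modulo p if p ≡ 2 (mod 3). -/
import Mathlib

open Finset

private lemma not_isSquare_two_mod_three : ¬ IsSquare (2 : ZMod 3) := by decide

private lemma fact_two_mul' (k : ℕ) :
    Nat.factorial (2 * k) = 2 ^ k * Nat.factorial k * ∏ j ∈ range k, (2 * j + 1) := by
  induction k with
  | zero => simp
  | succ k ih =>
    have h : 2 * (k + 1) = (2 * k + 1) + 1 := by ring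
    rw [h, Nat.factorial_succ, Nat.factorial_succ, ih, prod_range_succ, Nat.factorial_succ]
    ring

private lemma vandermonde_sq (k : ℕ) :
    ∑ m ∈ range (k + 1), (k.choose m) ^ 2 = (2 * k).choose k := by
  rw [two_mul, Nat.add_choose_eq, Finset.Nat.sum_antidiagonal_eq_sum_range_succ_mk]
  refine Finset.sum_congr rfl fun i hi => ?_
  have hik : i ≤ k := Nat.lt_succ_iff.mp (mem_range.mp hi)
  rw [Nat.choose_symm hik, sq]

theorem double_sum_choose_sq_mod_p (p : ℕ) (hp : p.Prime) (hp5 : 5 ≤ p) :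
    (p % 3 = 1 → (∑ n ∈ Finset.range p, ∑ m ∈ Finset.range p,
      ((n + m).choose m : ZMod p) ^ 2) = 1) ∧
    (p % 3 = 2 → (∑ n ∈ Finset.range p, ∑ m ∈ Finset.range p,
      ((n + m).choose m : ZMod p) ^ 2) = -1) := by
  haveI : Fact p.Prime := ⟨hp⟩
  have hp2 : p ≠ 2 := by omega
  have hodd : p % 2 = 1 := hp.eq_two_or_odd.resolve_left hp2
  have hdiv : 2 * (p / 2) + 1 = p := by omega
  -- Step A: reduce the double sum to ∑ central binomials
  have stepA : (∑ n ∈ Finset.range p, ∑ m ∈ Finset.range p,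
      ((n + m).choose m : ZMod p) ^ 2) = ∑ k ∈ range p, ((2 * k).choose k : ZMod p) := by
    rw [← Finset.sum_product']
    have h1 : ∑ x ∈ range p ×ˢ range p, ((x.1 + x.2).choose x.2 : ZMod p) ^ 2
        = ∑ x ∈ (range p ×ˢ range p).filter (fun x => x.1 + x.2 < p),
            ((x.1 + x.2).choose x.2 : ZMod p) ^ 2 := by
      refine (Finset.sum_filter_of_ne ?_).symm
      intro x hx hne
      by_contra h
      push_neg at h
      apply hne
      have hx1 : x.1 < p := (mem_range.mp (mem_product.mp hx).1)
      have hx2 : x.2 < p := (mem_range.mp (mem_product.mp hx).2)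
      have hd : p ∣ (x.1 + x.2).choose x.2 := by
        have := Nat.Prime.dvd_choose_add hp hx2 hx1 (by omega)
        rwa [Nat.add_comm x.2 x.1] at this
      rw [(ZMod.natCast_eq_zero_iff _ _).mpr hd]
      ring
    rw [h1]
    have h2 : ∑ x ∈ (range p ×ˢ range p).filter (fun x => x.1 + x.2 < p),
            ((x.1 + x.2).choose x.2 : ZMod p) ^ 2
        = ∑ x ∈ (range p).sigma (fun k => range (k + 1)),
            ((x.1.choose x.2 : ZMod p)) ^ 2 := by
      refine Finset.sum_nbij' (fun x => ⟨x.1 + x.2, x.2⟩) (fun x => (x.1 - x.2, x.2))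
        ?_ ?_ ?_ ?_ ?_
      · intro a ha
        simp only [mem_filter, mem_product, mem_range] at ha
        simp only [mem_sigma, mem_range]
        omega
      · intro a ha
        simp only [mem_sigma, mem_range] at ha
        simp only [mem_filter, mem_product, mem_range]
        omega
      · intro a ha; simp
      · intro a ha
        simp only [mem_sigma, mem_range] at ha
        have h : a.fst - a.snd + a.snd = a.fst := by omega
        exact Sigma.ext h HEq.rfl
      · intro a ha; rfl
    rw [h2, Finset.sum_sigma]
    refine Finset.sum_congr rfl fun k hk => ?_
    have : ∑ m ∈ range (k + 1), ((k.choose m : ZMod p)) ^ 2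
        = ((∑ m ∈ range (k + 1), (k.choose m) ^ 2 : ℕ) : ZMod p) := by
      push_cast; ring_nf
    rw [this, vandermonde_sq]
  -- key lemma: central binomial ≡ (-4)^k * C(p/2, k)
  have key : ∀ k < p, ((2 * k).choose k : ZMod p)
      = (-4 : ZMod p) ^ k * ((p / 2).choose k : ZMod p) := by
    intro k hk
    rcases le_or_gt k (p / 2) with hkh | hkh
    · -- k ≤ p/2
      have hfac : (Nat.factorial k : ZMod p) ≠ 0 := by
        rw [Ne, ZMod.natCast_eq_zero_iff]
        intro hdd
        exact absurd ((Nat.Prime.dvd_factorial hp).mp hdd) (by omega)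
      have h2z : (2 : ZMod p) ≠ 0 := by
        have : ((2 : ℕ) : ZMod p) ≠ 0 := by
          rw [Ne, ZMod.natCast_eq_zero_iff]
          intro hdd
          exact hp2 ((Nat.prime_dvd_prime_iff_eq hp Nat.prime_two).mp hdd)
        simpa using this
      have hcancel : (Nat.factorial k : ZMod p) * (Nat.factorial k : ZMod p)
          * (2 : ZMod p) ^ k ≠ 0 := by
        exact mul_ne_zero (mul_ne_zero hfac hfac) (pow_ne_zero _ h2z)
      apply mul_right_cancel₀ hcancel
      -- LHS * (k! * k! * 2^k) = (2k)! * 2^k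
      have hlhs : ((2 * k).choose k : ZMod p) * (↑(Nat.factorial k) * ↑(Nat.factorial k)
          * (2:ZMod p) ^ k) = ((Nat.factorial (2 * k) : ZMod p)) * 2 ^ k := by
        have hn : (2 * k).choose k * Nat.factorial k * Nat.factorial k
            = Nat.factorial (2 * k) := by
          have := Nat.choose_mul_factorial_mul_factorial
            (show k ≤ 2 * k by omega)
          rwa [show 2 * k - k = k by omega] at this
        calc ((2 * k).choose k : ZMod p) * (↑(Nat.factorial k) * ↑(Nat.factorial k)
              * (2:ZMod p) ^ k)
            = (((2 * k).choose k * Nat.factorial k * Nat.factorial k : ℕ) : ZMod p)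
              * 2 ^ k := by push_cast; ring
          _ = ((Nat.factorial (2 * k) : ZMod p)) * 2 ^ k := by rw [hn]
      rw [hlhs, fact_two_mul' k]
      -- now handle RHS
      have hdesc : ((p / 2).choose k : ZMod p) * (Nat.factorial k : ZMod p)
          = (((p / 2).descFactorial k : ℕ) : ZMod p) := by
        rw [Nat.descFactorial_eq_factorial_mul_choose]
        push_cast; ring
      have h2h : (2 : ZMod p) * ((p / 2 : ℕ) : ZMod p) = -1 := by
        have hcast : ((2 * (p / 2) + 1 : ℕ) : ZMod p) = ((p : ℕ) : ZMod p) := by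
          rw [hdiv]
        rw [ZMod.natCast_self] at hcast
        push_cast at hcast
        linear_combination hcast
      have hprod : (((p / 2).descFactorial k : ℕ) : ZMod p) * 2 ^ k
          = (-1 : ZMod p) ^ k * ∏ j ∈ range k, ((2 * j + 1 : ℕ) : ZMod p) := by
        rw [Nat.descFactorial_eq_prod_range, Nat.cast_prod]
        have hfac2 : ∀ j ∈ range k, ((p / 2 - j : ℕ) : ZMod p) * 2
            = (-1) * ((2 * j + 1 : ℕ) : ZMod p) := by
          intro j hj
          have hj' : j ≤ p / 2 := le_trans (le_of_lt (mem_range.mp hj)) hkh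
          rw [Nat.cast_sub hj']
          push_cast
          linear_combination h2h
        calc (∏ j ∈ range k, ((p / 2 - j : ℕ) : ZMod p)) * 2 ^ k
            = ∏ j ∈ range k, (((p / 2 - j : ℕ) : ZMod p) * 2) := by
              rw [Finset.prod_mul_distrib, Finset.prod_const, card_range]
          _ = ∏ j ∈ range k, ((-1) * ((2 * j + 1 : ℕ) : ZMod p)) :=
              Finset.prod_congr rfl hfac2
          _ = (-1 : ZMod p) ^ k * ∏ j ∈ range k, ((2 * j + 1 : ℕ) : ZMod p) := by
              rw [Finset.prod_mul_distrib, Finset.prod_const, card_range]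
      have h4 : (-4 : ZMod p) ^ k = (-1 : ZMod p) ^ k * 2 ^ k * 2 ^ k := by
        rw [show (-4 : ZMod p) = (-1) * 2 * 2 by norm_num, mul_pow, mul_pow]
      have hneg : (-1 : ZMod p) ^ k * (-1 : ZMod p) ^ k = 1 := by
        rw [← pow_add, ← two_mul, pow_mul, neg_one_sq, one_pow]
      rw [h4]
      push_cast
      push_cast at hdesc hprod
      linear_combination
        (-((-1 : ZMod p) ^ k * 2 ^ k * 2 ^ k * 2 ^ k * (Nat.factorial k : ZMod p))) * hdesc
        + (-((-1 : ZMod p) ^ k * 2 ^ k * 2 ^ k * (Nat.factorial k : ZMod p))) * hprod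
        + (-(2 ^ k * 2 ^ k * (Nat.factorial k : ZMod p)
            * ∏ x ∈ range k, (2 * (x : ZMod p) + 1))) * hneg
    · -- k > p/2 : both sides are 0
      have h1 : (p / 2).choose k = 0 := Nat.choose_eq_zero_of_lt hkh
      have h2 : p ∣ (2 * k).choose k := by
        have := Nat.Prime.dvd_choose_add hp hk hk (by omega)
        rwa [show k + k = 2 * k by ring] at this
      rw [h1, (ZMod.natCast_eq_zero_iff _ _).mpr h2]
      simp
  -- Step B: sum of central binomials is (-3)^(p/2)
  have stepB : ∑ k ∈ range p, ((2 * k).choose k : ZMod p) = (-3 : ZMod p) ^ (p / 2) := by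
    rw [Finset.sum_congr rfl (fun k hk => key k (mem_range.mp hk))]
    have hsub : range (p / 2 + 1) ⊆ range p := by
      intro x hx
      simp only [mem_range] at *
      omega
    rw [← Finset.sum_subset hsub (fun x _ hx => by
      rw [Nat.choose_eq_zero_of_lt (by simp only [mem_range] at hx; omega), Nat.cast_zero,
        mul_zero])]
    rw [show (-3 : ZMod p) = -4 + 1 by norm_num, add_pow]
    exact Finset.sum_congr rfl fun k _ => by rw [one_pow, mul_one]
  -- Step C: Euler's criterion and quadratic reciprocity
  haveI : Fact (Nat.Prime 3) := ⟨by norm_num⟩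
  have hp3 : p ≠ 3 := by omega
  have hpow : (-3 : ZMod p) ^ (p / 2) = ((legendreSym p (-3) : ℤ) : ZMod p) := by
    rw [legendreSym.eq_pow]
    norm_num
  have hpz3 : ((p : ℤ) : ZMod 3) ≠ 0 := by
    rw [Ne, ZMod.intCast_zmod_eq_zero_iff_dvd]
    intro hdd
    have : (3 : ℕ) ∣ p := by exact_mod_cast hdd
    exact hp3 ((Nat.prime_dvd_prime_iff_eq (by norm_num) hp).mp this).symm
  have hsq : legendreSym 3 (p : ℤ) * legendreSym 3 (p : ℤ) = 1 := by
    have h := legendreSym.sq_one (p := 3) (a := (p : ℤ)) hpz3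
    linear_combination h
  have hls : legendreSym p (-3) = legendreSym 3 (p : ℤ) := by
    have hQR := legendreSym.quadratic_reciprocity (p := 3) (q := p) (by norm_num) hp2
      (fun h => hp3 h.symm)
    have hmul : legendreSym p (-3) = legendreSym p (-1) * legendreSym p 3 := by
      rw [← legendreSym.mul]
      norm_num
    have hneg1 : legendreSym p (-1) = (-1 : ℤ) ^ (p / 2) := by
      rw [legendreSym.at_neg_one hp2, ZMod.χ₄_eq_neg_one_pow hodd]
    have he : (3 : ℕ) / 2 * (p / 2) = p / 2 := by omega
    rw [he] at hQR
    have hsqneg : ((-1 : ℤ) ^ (p / 2)) * ((-1 : ℤ) ^ (p / 2)) = 1 := by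
      rw [← pow_add, ← two_mul, pow_mul, neg_one_sq, one_pow]
    have hC : legendreSym p 3 = (-1 : ℤ) ^ (p / 2) * legendreSym 3 (p : ℤ) := by
      linear_combination (legendreSym 3 (p : ℤ)) * hQR - (legendreSym p 3) * hsq
    rw [hmul, hneg1, hC]
    linear_combination (legendreSym 3 (p : ℤ)) * hsqneg
  constructor
  · intro h31
    have hm : (p : ℤ) % ((3 : ℕ) : ℤ) = 1 := by push_cast; omega
    rw [stepA, stepB, hpow, hls, legendreSym.mod, hm, legendreSym.at_one, Int.cast_one]
  · intro h32
    have hm : (p : ℤ) % ((3 : ℕ) : ℤ) = 2 := by push_cast; omega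
    have hns : ¬ IsSquare (2 : ZMod 3) := not_isSquare_two_mod_three
    have h2n : legendreSym 3 (2 : ℤ) = -1 := by
      refine (legendreSym.eq_neg_one_iff 3).mpr ?_
      rw [show ((2 : ℤ) : ZMod 3) = 2 by norm_cast]
      exact hns
    rw [stepA, stepB, hpow, hls, legendreSym.mod, hm, h2n, Int.cast_neg, Int.cast_one]
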